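/- Let G=(V,E) be a connected d-regular graph (possibly with loops), and let G' be obtained from G by deleting all loops. Let λ and λ' denote the second largest eigenvalue moduli of the simple-walk transition matrices of G and G' respectively. Then 1 − λ' ≤ d · (1 − λ). -/

import Mathlib

open Matrix

lemma mem_spectrum_iff_exists {n : ℕ} (M : Matrix (Fin n) (Fin n) ℝ) (μ : ℝ) :
    μ ∈ spectrum ℝ M ↔ ∃ v, v ≠ 0 ∧ M *ᵥ v = μ • v := by
  rw [spectrum.mem_iff, Matrix.isUnit_iff_isUnit_det, isUnit_iff_ne_zero, not_ne_iff,
    ← Matrix.exists_mulVec_eq_zero_iff]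
  have key : ∀ v : Fin n → ℝ, (algebraMap ℝ (Matrix (Fin n) (Fin n) ℝ) μ - M) *ᵥ v
      = μ • v - M *ᵥ v := by
    intro v
    rw [Matrix.sub_mulVec]
    congr 1
    funext i
    simp [Matrix.algebraMap_matrix_apply, Matrix.mulVec, dotProduct,
      Finset.sum_ite_eq, eq_comm]
  constructor
  · rintro ⟨v, hv, h⟩
    rw [key, sub_eq_zero] at h
    exact ⟨v, hv, h.symm⟩
  · rintro ⟨v, hv, h⟩
    exact ⟨v, hv, by rw [key, h, sub_self]⟩

lemma stochastic_eig_bound {n : ℕ} (M : Matrix (Fin n) (Fin n) ℝ)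
    (hpos : ∀ i j, 0 ≤ M i j) (hrow : ∀ i, ∑ j, M i j = 1)
    (μ : ℝ) (v : Fin n → ℝ) (hv : v ≠ 0) (h : M *ᵥ v = μ • v) : |μ| ≤ 1 := by
  have hne : (Finset.univ : Finset (Fin n)).Nonempty := by
    rcases Function.ne_iff.mp hv with ⟨i, _⟩
    exact ⟨i, Finset.mem_univ i⟩
  obtain ⟨i0, -, hmax⟩ := Finset.exists_max_image Finset.univ (fun i => |v i|) hne
  have hpos0 : 0 < |v i0| := by
    rcases Function.ne_iff.mp hv with ⟨i, hi⟩
    exact lt_of_lt_of_le (abs_pos.mpr hi) (hmax i (Finset.mem_univ i))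
  have h0 := congrFun h i0
  simp only [Matrix.mulVec, dotProduct, Pi.smul_apply, smul_eq_mul] at h0
  have : |μ| * |v i0| ≤ |v i0| := by
    calc |μ| * |v i0| = |μ * v i0| := (abs_mul μ (v i0)).symm
    _ = |∑ j, M i0 j * v j| := by rw [← h0]
    _ ≤ ∑ j, |M i0 j * v j| := Finset.abs_sum_le_sum_abs _ _
    _ ≤ ∑ j, M i0 j * |v i0| := by
        apply Finset.sum_le_sum
        intro j _
        rw [abs_mul, abs_of_nonneg (hpos i0 j)]
        exact mul_le_mul_of_nonneg_left (hmax j (Finset.mem_univ j)) (hpos i0 j)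
    _ = |v i0| := by rw [← Finset.sum_mul, hrow, one_mul]
  exact le_of_mul_le_mul_right (by linarith) hpos0

lemma max_principle {n : ℕ} (M : Matrix (Fin n) (Fin n) ℝ)
    (hpos : ∀ i j, 0 ≤ M i j) (hrow : ∀ i, ∑ j, M i j = 1)
    (r : Fin n → Fin n → Prop) (hr : ∀ a b, r a b → 0 < M a b)
    (hconn : ∀ i j, Relation.ReflTransGen r i j)
    (y : Fin n → ℝ) (h : M *ᵥ y = y) : ∀ i j, y i = y j := by
  intro i j
  have hne : (Finset.univ : Finset (Fin n)).Nonempty := ⟨i, Finset.mem_univ i⟩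
  obtain ⟨i0, -, hmax⟩ := Finset.exists_max_image Finset.univ y hne
  have step : ∀ a b, y a = y i0 → r a b → y b = y i0 := by
    intro a b ha hab
    have h0 := congrFun h a
    simp only [Matrix.mulVec, dotProduct] at h0
    have hsum : ∑ k, M a k * (y i0 - y k) = 0 := by
      have : ∑ k, M a k * (y i0 - y k) = (∑ k, M a k) * y i0 - ∑ k, M a k * y k := by
        rw [Finset.sum_mul, ← Finset.sum_sub_distrib]
        congr 1; funext k; ring
      rw [this, hrow, one_mul, h0, ha, sub_self]
    have hterm : ∀ k ∈ Finset.univ, 0 ≤ M a k * (y i0 - y k) := by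
      intro k _
      exact mul_nonneg (hpos a k) (by linarith [hmax k (Finset.mem_univ k)])
    have := (Finset.sum_eq_zero_iff_of_nonneg hterm).mp hsum b (Finset.mem_univ b)
    rcases mul_eq_zero.mp this with h1 | h2
    · exact absurd h1 (ne_of_gt (hr a b hab))
    · linarith
  have key : ∀ k, y k = y i0 := by
    intro k
    induction hconn i0 k with
    | refl => rfl
    | tail _ hab ih => exact step _ _ ih hab
  rw [key i, key j]

variable {n : ℕ} {N : Matrix (Fin n) (Fin n) ℝ}

lemma herm_symm (hN : N.IsHermitian) (u v : Fin n → ℝ) : v ⬝ᵥ (N *ᵥ u) = (N *ᵥ v) ⬝ᵥ u := by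
  have ht : Nᵀ = N := by
    ext i j
    have := congrFun (congrFun hN.eq i) j
    simpa using this
  rw [Matrix.dotProduct_mulVec, ← Matrix.mulVec_transpose, ht]

lemma inner_dot (x y : EuclideanSpace ℝ (Fin n)) : @inner ℝ _ _ x y = (x : Fin n → ℝ) ⬝ᵥ y := by
  simp [PiLp.inner_apply, RCLike.inner_apply, conj_trivial, dotProduct]
  exact Finset.sum_congr rfl fun _ _ => mul_comm _ _

lemma parseval (hN : N.IsHermitian) (u : Fin n → ℝ) :
    u ⬝ᵥ u = ∑ i, ((hN.eigenvectorBasis i : Fin n → ℝ) ⬝ᵥ u) ^ 2 := by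
  have h := (hN.eigenvectorBasis.repr.inner_map_map (WithLp.toLp 2 u) (WithLp.toLp 2 u)).symm
  rw [inner_dot, inner_dot] at h
  rw [h, dotProduct]
  congr 1
  funext i
  have h1 := hN.eigenvectorBasis.repr_apply_apply (WithLp.toLp 2 u) i
  rw [inner_dot] at h1
  rw [show ((hN.eigenvectorBasis.repr (WithLp.toLp 2 u) : Fin n → ℝ) i) = (hN.eigenvectorBasis i : Fin n → ℝ) ⬝ᵥ u from h1]
  ring

lemma quad_decomp (hN : N.IsHermitian) (u : Fin n → ℝ) :
    u ⬝ᵥ (N *ᵥ u) = ∑ i, hN.eigenvalues i * ((hN.eigenvectorBasis i : Fin n → ℝ) ⬝ᵥ u) ^ 2 := by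
  have h3 : ∀ i, (hN.eigenvectorBasis i : Fin n → ℝ) ⬝ᵥ (N *ᵥ u)
      = hN.eigenvalues i * ((hN.eigenvectorBasis i : Fin n → ℝ) ⬝ᵥ u) := by
    intro i
    have h4 : N *ᵥ (hN.eigenvectorBasis i : Fin n → ℝ)
        = hN.eigenvalues i • (hN.eigenvectorBasis i : Fin n → ℝ) := hN.mulVec_eigenvectorBasis i
    rw [herm_symm hN, h4, smul_dotProduct, smul_eq_mul]
  have h := (hN.eigenvectorBasis.repr.inner_map_map (WithLp.toLp 2 u)
    (WithLp.toLp 2 (N *ᵥ u))).symm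
  rw [inner_dot, inner_dot] at h
  rw [h, dotProduct]
  congr 1
  funext i
  have h1 := hN.eigenvectorBasis.repr_apply_apply (WithLp.toLp 2 u) i
  have h2 := hN.eigenvectorBasis.repr_apply_apply (WithLp.toLp 2 (N *ᵥ u)) i
  rw [inner_dot] at h1 h2
  rw [show ((hN.eigenvectorBasis.repr (WithLp.toLp 2 u) : Fin n → ℝ) i) = (hN.eigenvectorBasis i : Fin n → ℝ) ⬝ᵥ u from h1,
    show ((hN.eigenvectorBasis.repr (WithLp.toLp 2 (N *ᵥ u)) : Fin n → ℝ) i)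
      = (hN.eigenvectorBasis i : Fin n → ℝ) ⬝ᵥ (N *ᵥ u) from h2, h3 i]
  ring

lemma exists_eig_ub (hN : N.IsHermitian)
    (w u : Fin n → ℝ)
    (hmult : ∀ v : Fin n → ℝ, v ≠ 0 → N *ᵥ v = v → ∃ t : ℝ, v = t • w)
    (hu : w ⬝ᵥ u = 0) (hu0 : 0 < u ⬝ᵥ u) :
    ∃ θ, (∃ v, v ≠ 0 ∧ N *ᵥ v = θ • v) ∧ θ ≠ 1 ∧ u ⬝ᵥ (N *ᵥ u) ≤ θ * (u ⬝ᵥ u) := by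
  set c : Fin n → ℝ := fun i => (hN.eigenvectorBasis i : Fin n → ℝ) ⬝ᵥ u with hc
  have hzero : ∀ i, hN.eigenvalues i = 1 → c i = 0 := by
    intro i h1
    have hB : N *ᵥ (hN.eigenvectorBasis i : Fin n → ℝ)
        = hN.eigenvalues i • (hN.eigenvectorBasis i : Fin n → ℝ) := hN.mulVec_eigenvectorBasis i
    rw [h1, one_smul] at hB
    have hBne : (hN.eigenvectorBasis i : Fin n → ℝ) ≠ 0 :=
      (by simpa using hN.eigenvectorBasis.orthonormal.ne_zero i)
    obtain ⟨t, ht⟩ := hmult _ hBne hB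
    simp only [hc, ht, smul_dotProduct, smul_eq_mul, dotProduct_comm w u] at *
    rw [hu, mul_zero]
  have hTne : (Finset.univ.filter fun i => c i ≠ 0).Nonempty := by
    by_contra hemp
    rw [Finset.not_nonempty_iff_eq_empty, Finset.filter_eq_empty_iff] at hemp
    have : u ⬝ᵥ u = 0 := by
      rw [parseval hN u]
      apply Finset.sum_eq_zero
      intro i _
      have := hemp (Finset.mem_univ i)
      simp only [not_not] at this
      rw [show (hN.eigenvectorBasis i : Fin n → ℝ) ⬝ᵥ u = c i from rfl, this]
      ring
    linarith
  obtain ⟨i0, hi0T, hmax⟩ := Finset.exists_max_image _ (fun i => hN.eigenvalues i) hTne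
  refine ⟨hN.eigenvalues i0, ⟨_, (by simpa using hN.eigenvectorBasis.orthonormal.ne_zero i0),
    hN.mulVec_eigenvectorBasis i0⟩, ?_, ?_⟩
  · intro h1
    have := hzero i0 h1
    rw [Finset.mem_filter] at hi0T
    exact hi0T.2 this
  · rw [quad_decomp hN u, parseval hN u, Finset.mul_sum]
    apply Finset.sum_le_sum
    intro i _
    rw [show (hN.eigenvectorBasis i : Fin n → ℝ) ⬝ᵥ u = c i from rfl]
    by_cases hci : c i = 0
    · rw [hci]; ring_nf; rfl
    · have hle := hmax i (Finset.mem_filter.mpr ⟨Finset.mem_univ i, hci⟩)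
      exact mul_le_mul_of_nonneg_right hle (sq_nonneg _)

lemma exists_eig_lb (hN : N.IsHermitian) (u : Fin n → ℝ) (hu0 : 0 < u ⬝ᵥ u) :
    ∃ θ, (∃ v, v ≠ 0 ∧ N *ᵥ v = θ • v) ∧ θ * (u ⬝ᵥ u) ≤ u ⬝ᵥ (N *ᵥ u) := by
  set c : Fin n → ℝ := fun i => (hN.eigenvectorBasis i : Fin n → ℝ) ⬝ᵥ u with hc
  have hTne : (Finset.univ.filter fun i => c i ≠ 0).Nonempty := by
    by_contra hemp
    rw [Finset.not_nonempty_iff_eq_empty, Finset.filter_eq_empty_iff] at hemp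
    have : u ⬝ᵥ u = 0 := by
      rw [parseval hN u]
      apply Finset.sum_eq_zero
      intro i _
      have := hemp (Finset.mem_univ i)
      simp only [not_not] at this
      rw [show (hN.eigenvectorBasis i : Fin n → ℝ) ⬝ᵥ u = c i from rfl, this]
      ring
    linarith
  obtain ⟨i0, hi0T, hmin⟩ := Finset.exists_min_image _ (fun i => hN.eigenvalues i) hTne
  refine ⟨hN.eigenvalues i0, ⟨_, (by simpa using hN.eigenvectorBasis.orthonormal.ne_zero i0),
    hN.mulVec_eigenvectorBasis i0⟩, ?_⟩
  rw [quad_decomp hN u, parseval hN u, Finset.mul_sum]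
  apply Finset.sum_le_sum
  intro i _
  rw [show (hN.eigenvectorBasis i : Fin n → ℝ) ⬝ᵥ u = c i from rfl]
  by_cases hci : c i = 0
  · rw [hci]; ring_nf; rfl
  · have hle := hmin i (Finset.mem_filter.mpr ⟨Finset.mem_univ i, hci⟩)
    exact mul_le_mul_of_nonneg_right hle (sq_nonneg _)

set_option maxHeartbeats 2000000 in
/-- Let `G` be a connected `d`-regular graph (loops allowed) and `G'` the graph obtained by
deleting all loops.  If `λ` and `λ'` are the SLEMs of the simple walks on `G` and `G'`,
then `1 − λ' ≤ d (1 − λ)`. -/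
theorem stmt7 (n : ℕ) (hn : 2 ≤ n) (d : ℕ) (hd : 0 < d)
    (Adj : Matrix (Fin n) (Fin n) ℕ) (hsym : ∀ i j, Adj i j = Adj j i)
    (hreg : ∀ i, ∑ j, Adj i j = d)
    (hconn : ∀ i j : Fin n, Relation.ReflTransGen (fun a b => a ≠ b ∧ 0 < Adj a b) i j)
    (S S' : Matrix (Fin n) (Fin n) ℝ)
    (hS : ∀ i j, S i j = (Adj i j : ℝ) / (d : ℝ))
    (hS' : ∀ i j, S' i j = (if i = j then 0 else (Adj i j : ℝ)) /
      (∑ k ∈ Finset.univ.filter (fun k => k ≠ i), (Adj i k : ℝ)))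
    (lam lam' : ℝ)
    (hlam : lam = sSup {x : ℝ | ∃ μ ∈ spectrum ℝ S, μ ≠ 1 ∧ x = |μ|})
    (hlam' : lam' = sSup {x : ℝ | ∃ μ ∈ spectrum ℝ S', μ ≠ 1 ∧ x = |μ|}) :
    1 - lam' ≤ (d : ℝ) * (1 - lam) := by
  have hd0 : (0:ℝ) < d := by exact_mod_cast hd
  have hd1 : (1:ℝ) ≤ d := by exact_mod_cast hd
  -- basic degree facts
  set Dg : Fin n → ℝ := fun i => ∑ k ∈ Finset.univ.filter (fun k => k ≠ i), (Adj i k : ℝ) with hDg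
  have hA'sum : ∀ i (f : Fin n → ℝ),
      ∑ j, (if i = j then 0 else (Adj i j : ℝ)) * f j
        = (∑ j, (Adj i j : ℝ) * f j) - (Adj i i : ℝ) * f i := by
    intro i f
    have : ∀ j, (if i = j then 0 else (Adj i j : ℝ)) * f j
        = (Adj i j : ℝ) * f j - (if i = j then (Adj i i : ℝ) * f i else 0) := by
      intro j
      by_cases h : i = j
      · subst h; simp
      · simp [h]
    simp only [this]
    rw [Finset.sum_sub_distrib, Finset.sum_ite_eq]
    simp
  have hDg_eq : ∀ i, Dg i = ∑ j, (if i = j then 0 else (Adj i j : ℝ)) * 1 := by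
    intro i
    rw [hDg]
    simp only [mul_one]
    rw [Finset.sum_filter]
    congr 1
    funext k
    by_cases h : k = i
    · subst h; simp
    · simp [h, Ne.symm h]
  have hrow : ∀ i, ∑ j, (Adj i j : ℝ) = d := by
    intro i
    rw [← Nat.cast_sum, hreg]
  have hDgd : ∀ i, Dg i = (d:ℝ) - Adj i i := by
    intro i
    rw [hDg_eq i, hA'sum i (fun _ => 1)]
    simp [hrow i]
  have hnb : ∀ i : Fin n, ∃ b, i ≠ b ∧ 0 < Adj i b := by
    intro i
    have hcard : 1 < Fintype.card (Fin n) := by simp; omega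
    obtain ⟨j, hj⟩ := Fintype.exists_ne_of_one_lt_card hcard i
    rcases (hconn i j).cases_head with h | ⟨c, hc, -⟩
    · exact absurd h.symm hj
    · exact ⟨c, hc⟩
  have hDg1 : ∀ i, 1 ≤ Dg i := by
    intro i
    obtain ⟨b, hb, hpos⟩ := hnb i
    rw [hDg]
    calc (1:ℝ) ≤ (Adj i b : ℝ) := by exact_mod_cast hpos
    _ ≤ _ := by
        apply Finset.single_le_sum (f := fun k => (Adj i k : ℝ))
        · intro k _; positivity
        · simp [Ne.symm hb]
  have hDgpos : ∀ i, 0 < Dg i := fun i => lt_of_lt_of_le one_pos (hDg1 i)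
  set s : Fin n → ℝ := fun i => Real.sqrt (Dg i) with hsdef
  have hspos : ∀ i, 0 < s i := fun i => Real.sqrt_pos.mpr (hDgpos i)
  have hssq : ∀ i, s i * s i = Dg i := fun i => Real.mul_self_sqrt (le_of_lt (hDgpos i))
  set N : Matrix (Fin n) (Fin n) ℝ :=
    Matrix.of (fun i j => (if i = j then 0 else (Adj i j : ℝ)) / (s i * s j)) with hNdef
  have hNentry : ∀ i j, N i j = (if i = j then 0 else (Adj i j : ℝ)) / (s i * s j) :=
    fun i j => rfl
  have hNherm : N.IsHermitian := by
    ext i j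
    rw [Matrix.conjTranspose_apply, hNentry, hNentry]
    by_cases h : i = j
    · subst h; simp
    · simp only [h, Ne.symm h, if_false, star_trivial]
      rw [hsym j i, mul_comm]
  have hS'entry : ∀ i j, S' i j = (if i = j then 0 else (Adj i j : ℝ)) / Dg i := hS'
  have hS'nonneg : ∀ i j, 0 ≤ S' i j := by
    intro i j
    rw [hS'entry i j]
    apply div_nonneg _ (le_of_lt (hDgpos i))
    by_cases h : i = j <;> simp [h]
  have hS'row : ∀ i, ∑ j, S' i j = 1 := by
    intro i
    simp only [hS'entry]
    rw [← Finset.sum_div]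
    rw [show ∑ j, (if i = j then 0 else (Adj i j : ℝ)) = Dg i by
      rw [hDg_eq i]; simp]
    exact div_self (ne_of_gt (hDgpos i))
  have hS'pos : ∀ a b, a ≠ b → 0 < Adj a b → 0 < S' a b := by
    intro a b hab hpos
    rw [hS'entry a b, if_neg hab]
    exact div_pos (by exact_mod_cast hpos) (hDgpos a)
  have htrans : ∀ (θ : ℝ) (v : Fin n → ℝ), N *ᵥ v = θ • v →
      S' *ᵥ (fun i => v i / s i) = θ • (fun i => v i / s i) := by
    intro θ v hv
    funext i
    have hvi := congrFun hv i
    simp only [Matrix.mulVec, dotProduct, Pi.smul_apply, smul_eq_mul, hNentry] at hvi ⊢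
    have hterm : ∀ j, S' i j * (v j / s j)
        = (1 / s i) * ((if i = j then 0 else (Adj i j : ℝ)) / (s i * s j) * v j) := by
      intro j
      rw [hS'entry i j, ← hssq i]
      field_simp
    calc ∑ j, S' i j * (v j / s j)
        = ∑ j, (1 / s i) * ((if i = j then 0 else (Adj i j : ℝ)) / (s i * s j) * v j) := by
          exact Finset.sum_congr rfl (fun j _ => hterm j)
      _ = (1 / s i) * ∑ j, (if i = j then 0 else (Adj i j : ℝ)) / (s i * s j) * v j := by
          rw [Finset.mul_sum]
      _ = (1 / s i) * (θ * v i) := by rw [hvi]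
      _ = θ * (v i / s i) := by ring
  have hweig : N *ᵥ s = s := by
    funext i
    simp only [Matrix.mulVec, dotProduct, hNentry]
    have hterm : ∀ j, (if i = j then 0 else (Adj i j : ℝ)) / (s i * s j) * s j
        = (if i = j then 0 else (Adj i j : ℝ)) * 1 / s i := by
      intro j
      rcases eq_or_ne i j with h | h
      · simp [h]
      · rw [if_neg h]
        rw [div_mul_eq_mul_div, mul_comm (s i) (s j), ← div_div,
          mul_div_assoc, div_self (ne_of_gt (hspos j)), mul_one]
    rw [Finset.sum_congr rfl (fun j _ => hterm j), ← Finset.sum_div, ← hDg_eq i, ← hssq i]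
    field_simp
  have hmult : ∀ v : Fin n → ℝ, v ≠ 0 → N *ᵥ v = v → ∃ t : ℝ, v = t • s := by
    intro v hv0 hv
    have hy := htrans 1 v (by rw [hv, one_smul])
    rw [one_smul] at hy
    have hconst := max_principle S' hS'nonneg hS'row _ (fun a b hab => hS'pos a b hab.1 hab.2)
      hconn _ hy
    have i0 : Fin n := ⟨0, by omega⟩
    refine ⟨v i0 / s i0, ?_⟩
    funext i
    have h1 := hconst i i0
    rw [div_eq_div_iff (ne_of_gt (hspos i)) (ne_of_gt (hspos i0))] at h1
    show v i = (v i0 / s i0) * s i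
    rw [div_mul_eq_mul_div, eq_div_iff (ne_of_gt (hspos i0))]
    linarith [h1]
  -- facts about S
  have hSnonneg : ∀ i j, 0 ≤ S i j := by
    intro i j; rw [hS]; positivity
  have hSrow : ∀ i, ∑ j, S i j = 1 := by
    intro i; simp only [hS]; rw [← Finset.sum_div, hrow i]; exact div_self (ne_of_gt hd0)
  have hScol : ∀ j, ∑ i, S i j = 1 := by
    intro j
    rw [show ∑ i, S i j = ∑ i, S j i from Finset.sum_congr rfl fun i _ => by
      rw [hS, hS, hsym]]
    exact hSrow j
  -- facts about lam'
  have hbdd : BddAbove {x : ℝ | ∃ μ ∈ spectrum ℝ S', μ ≠ 1 ∧ x = |μ|} := by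
    refine ⟨1, ?_⟩
    rintro x ⟨μ, hμ, -, rfl⟩
    obtain ⟨v, hv0, hveq⟩ := (mem_spectrum_iff_exists S' μ).mp hμ
    exact stochastic_eig_bound S' hS'nonneg hS'row μ v hv0 hveq
  have hlam'_ge : ∀ μ, μ ∈ spectrum ℝ S' → μ ≠ 1 → |μ| ≤ lam' := by
    intro μ hμ hne
    rw [hlam']
    exact le_csSup hbdd ⟨μ, hμ, hne, rfl⟩
  have hlam'_nonneg : 0 ≤ lam' := by
    rw [hlam']
    rcases Set.eq_empty_or_nonempty {x : ℝ | ∃ μ ∈ spectrum ℝ S', μ ≠ 1 ∧ x = |μ|} with h | ⟨x, hx⟩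
    · rw [h, Real.sSup_empty]
    · obtain ⟨μ, hμ, hne, rfl⟩ := hx
      exact le_trans (abs_nonneg μ) (le_csSup hbdd ⟨μ, hμ, hne, rfl⟩)
  -- Laplacian
  set L : Matrix (Fin n) (Fin n) ℝ :=
    Matrix.of (fun i j => (if i = j then (d:ℝ) else 0) - (Adj i j : ℝ)) with hLdef
  have hLentry : ∀ i j, L i j = (if i = j then (d:ℝ) else 0) - (Adj i j : ℝ) := fun _ _ => rfl
  have hLherm : L.IsHermitian := by
    ext i j
    rw [Matrix.conjTranspose_apply, hLentry, hLentry]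
    by_cases h : i = j
    · subst h; simp
    · simp only [h, Ne.symm h, if_false, star_trivial]
      rw [hsym j i]
  have hLrow : ∀ i v, (L *ᵥ v) i = (d:ℝ) * v i - ∑ j, (Adj i j : ℝ) * v j := by
    intro i v
    simp only [Matrix.mulVec, dotProduct, hLentry, sub_mul]
    rw [Finset.sum_sub_distrib]
    congr 1
    simp [ite_mul, Finset.sum_ite_eq]
  have hL1 : L *ᵥ (fun _ => (1:ℝ)) = 0 := by
    funext i
    rw [hLrow i]
    simp only [mul_one, Pi.zero_apply]
    rw [hrow i]
    ring
  -- the key per-eigenvalue bound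
  have key : ∀ μ, μ ∈ spectrum ℝ S → μ ≠ 1 → 1 - lam' ≤ (d:ℝ) * (1 - |μ|) := by
    intro μ hμ hμne
    obtain ⟨x, hx0, hxeq⟩ := (mem_spectrum_iff_exists S μ).mp hμ
    have hxxnn : 0 ≤ x ⬝ᵥ x := Finset.sum_nonneg fun i _ => mul_self_nonneg (x i)
    have hxx : 0 < x ⬝ᵥ x := by
      rcases lt_or_eq_of_le hxxnn with h | h
      · exact h
      · exact absurd ((dotProduct_self_eq_zero).mp h.symm) hx0
    have hmu1 : |μ| ≤ 1 := stochastic_eig_bound S hSnonneg hSrow μ x hx0 hxeq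
    have hAx : ∀ i, ∑ j, (Adj i j : ℝ) * x j = (d:ℝ) * μ * x i := by
      intro i
      have := congrFun hxeq i
      simp only [Matrix.mulVec, dotProduct, Pi.smul_apply, smul_eq_mul, hS] at this
      have h2 : ∑ j, (Adj i j : ℝ) / d * x j = (∑ j, (Adj i j : ℝ) * x j) / d := by
        rw [Finset.sum_div]
        exact Finset.sum_congr rfl fun j _ => by ring
      rw [h2] at this
      field_simp at this
      linarith [this]
    have hsumx : ∑ i, x i = 0 := by
      have h1 : ∑ i, (S *ᵥ x) i = μ * ∑ i, x i := by
        rw [hxeq]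
        simp only [Pi.smul_apply, smul_eq_mul]
        rw [Finset.mul_sum]
      have h2 : ∑ i, (S *ᵥ x) i = ∑ i, x i := by
        simp only [Matrix.mulVec, dotProduct]
        rw [Finset.sum_comm]
        calc ∑ j, ∑ i, S i j * x j = ∑ j, (∑ i, S i j) * x j := by
              exact Finset.sum_congr rfl fun j _ => (Finset.sum_mul _ _ _).symm
          _ = ∑ j, x j := by
              exact Finset.sum_congr rfl fun j _ => by rw [hScol j, one_mul]
      have h3 : (μ - 1) * ∑ i, x i = 0 := by rw [h2] at h1; linarith [h1]
      rcases mul_eq_zero.mp h3 with h | h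
      · exact absurd (by linarith [h] : μ = 1) hμne
      · exact h
    have hxLx : x ⬝ᵥ (L *ᵥ x) = (d:ℝ) * (1 - μ) * (x ⬝ᵥ x) := by
      simp only [dotProduct]
      calc ∑ i, x i * (L *ᵥ x) i = ∑ i, ((d:ℝ) * x i * x i - (d:ℝ) * μ * (x i * x i)) := by
            refine Finset.sum_congr rfl fun i _ => ?_
            rw [hLrow i x, hAx i]
            ring
        _ = (d:ℝ) * (1 - μ) * ∑ i, x i * x i := by
            rw [Finset.mul_sum]
            exact Finset.sum_congr rfl fun i _ => by ring
    -- bridge computations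
    have huu : ∀ z : Fin n → ℝ,
        (fun i => s i * z i) ⬝ᵥ (fun i => s i * z i) = ∑ i, Dg i * z i ^ 2 := by
      intro z
      simp only [dotProduct]
      refine Finset.sum_congr rfl fun i _ => ?_
      rw [show s i * z i * (s i * z i) = s i * s i * z i ^ 2 by ring, hssq i]
    have hbridge : ∀ z : Fin n → ℝ,
        (fun i => s i * z i) ⬝ᵥ (N *ᵥ (fun i => s i * z i))
          = ∑ i, z i * ∑ j, (if i = j then 0 else (Adj i j : ℝ)) * z j := by
      intro z
      simp only [dotProduct, Matrix.mulVec, hNentry]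
      refine Finset.sum_congr rfl fun i _ => ?_
      have hinner : ∀ j, (if i = j then 0 else (Adj i j : ℝ)) / (s i * s j) * (s j * z j)
          = ((if i = j then 0 else (Adj i j : ℝ)) * z j) / s i := by
        intro j
        rcases eq_or_ne i j with h | h
        · simp [h]
        · rw [if_neg h]
          have hsi := ne_of_gt (hspos i)
          have hsj := ne_of_gt (hspos j)
          field_simp
      rw [Finset.sum_congr rfl fun j _ => hinner j, ← Finset.sum_div]
      calc s i * z i * ((∑ j, (if i = j then 0 else (Adj i j : ℝ)) * z j) / s i)
          = z i * (∑ j, (if i = j then 0 else (Adj i j : ℝ)) * z j) * (s i / s i) := by ring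
        _ = z i * ∑ j, (if i = j then 0 else (Adj i j : ℝ)) * z j := by
            rw [div_self (ne_of_gt (hspos i)), mul_one]
    have hquadL : ∀ z : Fin n → ℝ,
        (∑ i, Dg i * z i ^ 2) - (∑ i, z i * ∑ j, (if i = j then 0 else (Adj i j : ℝ)) * z j)
          = z ⬝ᵥ (L *ᵥ z) := by
      intro z
      rw [← Finset.sum_sub_distrib]
      simp only [dotProduct]
      refine Finset.sum_congr rfl fun i _ => ?_
      rw [hA'sum i z, hLrow i z, hDgd i]
      ring
    rcases le_or_gt 0 μ with hμpos | hμneg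
    · -- positive eigenvalue case
      have hDgsum_pos : 0 < ∑ i, Dg i := by
        apply Finset.sum_pos (fun i _ => hDgpos i)
        exact ⟨⟨0, by omega⟩, Finset.mem_univ _⟩
      set c0 : ℝ := (∑ i, Dg i * x i) / (∑ i, Dg i) with hc0
      set z : Fin n → ℝ := fun i => x i - c0 with hz
      set u : Fin n → ℝ := fun i => s i * z i with hu
      have hwu : s ⬝ᵥ u = 0 := by
        simp only [dotProduct, hu]
        calc ∑ i, s i * (s i * z i) = ∑ i, Dg i * z i := by
              refine Finset.sum_congr rfl fun i _ => ?_
              rw [show s i * (s i * z i) = (s i * s i) * z i by ring, hssq i]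
          _ = (∑ i, Dg i * x i) - c0 * ∑ i, Dg i := by
              simp only [hz, mul_sub]
              rw [Finset.sum_sub_distrib]
              congr 1
              rw [Finset.mul_sum]
              exact Finset.sum_congr rfl fun i _ => by ring
          _ = 0 := by
              rw [hc0]
              field_simp
              ring
      have hzz : ∑ i, z i ^ 2 = x ⬝ᵥ x + n * c0 ^ 2 := by
        simp only [hz]
        have : ∀ i, (x i - c0) ^ 2 = x i * x i - 2 * c0 * x i + c0 ^ 2 := fun i => by ring
        rw [Finset.sum_congr rfl fun i _ => this i]
        rw [Finset.sum_add_distrib, Finset.sum_sub_distrib, ← Finset.mul_sum, hsumx]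
        simp [dotProduct, Finset.card_univ]
      have huu_ge : x ⬝ᵥ x ≤ u ⬝ᵥ u := by
        rw [huu z]
        calc x ⬝ᵥ x ≤ ∑ i, z i ^ 2 := by
              rw [hzz]
              nlinarith [sq_nonneg c0, Nat.cast_nonneg (α := ℝ) n]
          _ ≤ ∑ i, Dg i * z i ^ 2 := by
              refine Finset.sum_le_sum fun i _ => ?_
              nlinarith [hDg1 i, sq_nonneg (z i)]
      have hupos : 0 < u ⬝ᵥ u := lt_of_lt_of_le hxx huu_ge
      obtain ⟨θ, ⟨v, hv0, hveq⟩, hθne, hθub⟩ := exists_eig_ub hNherm s u hmult hwu hupos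
      have hy := htrans θ v hveq
      have hyne : (fun i => v i / s i) ≠ 0 := by
        intro h
        apply hv0
        funext i
        have h2 := congrFun h i
        simp only [Pi.zero_apply] at h2 ⊢
        rcases div_eq_zero_iff.mp h2 with h3 | h3
        · exact h3
        · exact absurd h3 (ne_of_gt (hspos i))
      have hθspec : θ ∈ spectrum ℝ S' := (mem_spectrum_iff_exists S' θ).mpr ⟨_, hyne, hy⟩
      have hθabs : |θ| ≤ 1 := stochastic_eig_bound S' hS'nonneg hS'row θ _ hyne hy
      have hθlam : |θ| ≤ lam' := hlam'_ge θ hθspec hθne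
      -- quadratic chain
      have e2 : u ⬝ᵥ u - u ⬝ᵥ (N *ᵥ u) = z ⬝ᵥ (L *ᵥ z) := by
        rw [show u ⬝ᵥ u = ∑ i, Dg i * z i ^ 2 from huu z,
          show u ⬝ᵥ (N *ᵥ u) = ∑ i, z i * ∑ j, (if i = j then 0 else (Adj i j : ℝ)) * z j
            from hbridge z]
        exact hquadL z
      have e3 : z ⬝ᵥ (L *ᵥ z) = x ⬝ᵥ (L *ᵥ x) := by
        have hzxc : z = x - c0 • (fun _ => (1:ℝ)) := by funext i; simp [hz]
        have hLz : L *ᵥ z = L *ᵥ x := by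
          rw [hzxc, Matrix.mulVec_sub, Matrix.mulVec_smul, hL1]
          simp
        rw [hLz, hzxc, sub_dotProduct, smul_dotProduct]
        have h1L : (fun _ => (1:ℝ)) ⬝ᵥ (L *ᵥ x) = 0 := by
          rw [herm_symm hLherm, hL1, zero_dotProduct]
        rw [h1L]
        simp
      have hchain : (1 - θ) * (x ⬝ᵥ x) ≤ (d:ℝ) * (1 - μ) * (x ⬝ᵥ x) := by
        have hθle1 : θ ≤ 1 := le_trans (le_abs_self θ) hθabs
        calc (1 - θ) * (x ⬝ᵥ x) ≤ (1 - θ) * (u ⬝ᵥ u) :=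
              mul_le_mul_of_nonneg_left huu_ge (by linarith)
          _ = u ⬝ᵥ u - θ * (u ⬝ᵥ u) := by ring
          _ ≤ u ⬝ᵥ u - u ⬝ᵥ (N *ᵥ u) := by linarith [hθub]
          _ = x ⬝ᵥ (L *ᵥ x) := by rw [e2, e3]
          _ = (d:ℝ) * (1 - μ) * (x ⬝ᵥ x) := hxLx
      have hfin : 1 - θ ≤ (d:ℝ) * (1 - μ) := le_of_mul_le_mul_right hchain hxx
      have habsμ : |μ| = μ := abs_of_nonneg hμpos
      have : θ ≤ lam' := le_trans (le_abs_self θ) hθlam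
      rw [habsμ]
      linarith
    · -- negative eigenvalue case
      set u : Fin n → ℝ := fun i => s i * x i with hu
      have huu_ge : x ⬝ᵥ x ≤ u ⬝ᵥ u := by
        rw [huu x]
        simp only [dotProduct]
        refine Finset.sum_le_sum fun i _ => ?_
        nlinarith [hDg1 i, sq_nonneg (x i)]
      have hupos : 0 < u ⬝ᵥ u := lt_of_lt_of_le hxx huu_ge
      obtain ⟨θ, ⟨v, hv0, hveq⟩, hθlb⟩ := exists_eig_lb hNherm u hupos
      have hy := htrans θ v hveq
      have hyne : (fun i => v i / s i) ≠ 0 := by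
        intro h
        apply hv0
        funext i
        have h2 := congrFun h i
        simp only [Pi.zero_apply] at h2 ⊢
        rcases div_eq_zero_iff.mp h2 with h3 | h3
        · exact h3
        · exact absurd h3 (ne_of_gt (hspos i))
      have hθspec : θ ∈ spectrum ℝ S' := (mem_spectrum_iff_exists S' θ).mpr ⟨_, hyne, hy⟩
      have hθabs : |θ| ≤ 1 := stochastic_eig_bound S' hS'nonneg hS'row θ _ hyne hy
      have hmuge : -1 ≤ μ := by
        have := abs_le.mp hmu1
        linarith [this.1]
      have hq : u ⬝ᵥ u + u ⬝ᵥ (N *ᵥ u) ≤ (d:ℝ) * (1 + μ) * (x ⬝ᵥ x) := by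
        rw [show u ⬝ᵥ u = ∑ i, Dg i * x i ^ 2 from huu x,
          show u ⬝ᵥ (N *ᵥ u) = ∑ i, x i * ∑ j, (if i = j then 0 else (Adj i j : ℝ)) * x j
            from hbridge x]
        rw [← Finset.sum_add_distrib,
          show (d:ℝ) * (1 + μ) * (x ⬝ᵥ x) = ∑ i, (d:ℝ) * (1 + μ) * (x i * x i) by
            rw [← Finset.mul_sum]; rfl]
        refine Finset.sum_le_sum fun i _ => ?_
        rw [hA'sum i x, hAx i, hDgd i]
        have hAiinn : (0:ℝ) ≤ (Adj i i : ℝ) := Nat.cast_nonneg _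
        nlinarith [sq_nonneg (x i)]
      have hstep : (1 + θ) * (u ⬝ᵥ u) ≤ (d:ℝ) * (1 + μ) * (u ⬝ᵥ u) := by
        have h1 : (1 + θ) * (u ⬝ᵥ u) ≤ u ⬝ᵥ u + u ⬝ᵥ (N *ᵥ u) := by
          have := hθlb
          nlinarith [hθlb]
        have h2 : (d:ℝ) * (1 + μ) * (x ⬝ᵥ x) ≤ (d:ℝ) * (1 + μ) * (u ⬝ᵥ u) := by
          apply mul_le_mul_of_nonneg_left huu_ge
          exact mul_nonneg hd0.le (by linarith)
        linarith
      have hfin : 1 + θ ≤ (d:ℝ) * (1 + μ) := le_of_mul_le_mul_right hstep hupos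
      have habsμ : |μ| = -μ := abs_of_neg hμneg
      rw [habsμ]
      rcases eq_or_ne θ 1 with h1 | hθne
      · rw [h1] at hfin
        linarith
      · have hθlam := hlam'_ge θ hθspec hθne
        linarith [neg_abs_le θ, hθlam]
  -- conclude
  rw [hlam]
  have hsup : sSup {x : ℝ | ∃ μ ∈ spectrum ℝ S, μ ≠ 1 ∧ x = |μ|} ≤ 1 - (1 - lam') / d := by
    apply Real.sSup_le
    · rintro x ⟨μ, hμ, hne, rfl⟩
      have := key μ hμ hne
      rw [le_sub_iff_add_le, ← le_sub_iff_add_le', div_le_iff₀ hd0]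
      linarith
    · have : (1 - lam') / d ≤ 1 := by
        rw [div_le_one hd0]
        linarith
      linarith
  have : (d:ℝ) * (1 - (1 - (1 - lam') / d)) = 1 - lam' := by
    field_simp
    ring
  nlinarith [mul_le_mul_of_nonneg_left (sub_le_sub_left hsup 1) (le_of_lt hd0)]
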